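/- Suppose (g_α)_{α<ω₁} is a <*-increasing dominating scale in ω^ω: whenever α < β < ω₁ then g_α <* g_β, and for every f ∈ ω^ω there exists α < ω₁ with f <* g_α. Then for every Laver tree L, the set of branches [L] is not contained in ⋃_{α<ω₁} C_{g_α}. -/

import Mathlib

open scoped Ordinal

/-- The restriction `x↾n` of `x : ℕ → ℕ` to its first `n` values, as a finite sequence. -/
def res (x : ℕ → ℕ) (n : ℕ) : List ℕ := List.ofFn fun i : Fin n => x i

/-- A subtree of `ω^{<ω}`: a set of finite sequences closed under initial segments. -/
def IsSubtree (T : Set (List ℕ)) : Prop := ∀ s ∈ T, ∀ t : List ℕ, t <+: s → t ∈ T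

/-- `[T]`, the set of branches of a subtree `T`. -/
def branches (T : Set (List ℕ)) : Set (ℕ → ℕ) := {x | ∀ n, res x n ∈ T}

/-- A Laver tree: a (nonempty) subtree in which every node splits infinitely often. -/
def IsLaver (T : Set (List ℕ)) : Prop :=
  IsSubtree T ∧ [] ∈ T ∧ ∀ s ∈ T, {n : ℕ | s ++ [n] ∈ T}.Infinite

/-- `C_g`: the set of `f` with `f(n) ∈ {2g(n), 2g(n)+1}` for all `n`,
i.e. `f = 2g + x` for some `x ∈ 2^ω`. -/
def Cset (g : ℕ → ℕ) : Set (ℕ → ℕ) :=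
  {f | ∀ n, f n = 2 * g n ∨ f n = 2 * g n + 1}

/-- `f <* g`: eventual domination. -/
def EvLt (f g : ℕ → ℕ) : Prop := ∀ᶠ n in Filter.atTop, f n < g n

/- ### Auxiliary construction -/

open Classical in
/-- Pick a successor value `> k` of node `s` in `L`. -/
noncomputable def nxt (L : Set (List ℕ)) (hL : IsLaver L) (s : List ℕ) (k : ℕ) : ℕ :=
  if h : s ∈ L then ((hL.2.2 s h).exists_gt k).choose else 0

lemma nxt_mem (L : Set (List ℕ)) (hL : IsLaver L) (s : List ℕ) (hs : s ∈ L) (k : ℕ) :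
    s ++ [nxt L hL s k] ∈ L := by
  unfold nxt; rw [dif_pos hs]
  exact ((hL.2.2 s hs).exists_gt k).choose_spec.1

lemma nxt_gt (L : Set (List ℕ)) (hL : IsLaver L) (s : List ℕ) (hs : s ∈ L) (k : ℕ) :
    k < nxt L hL s k := by
  unfold nxt; rw [dif_pos hs]
  exact ((hL.2.2 s hs).exists_gt k).choose_spec.2

/-- Two interleaved node sequences in `L`, crossing each other at alternate levels. -/
noncomputable def Q (L : Set (List ℕ)) (hL : IsLaver L) : ℕ → List ℕ × List ℕ
  | 0 => ([], [])
  | n+1 =>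
    let p := Q L hL n
    if Even n then
      let b := nxt L hL p.2 0
      let a := nxt L hL p.1 (2 * b + 1)
      (p.1 ++ [a], p.2 ++ [b])
    else
      let a := nxt L hL p.1 0
      let b := nxt L hL p.2 (2 * a + 1)
      (p.1 ++ [a], p.2 ++ [b])

lemma Q_invariant (L : Set (List ℕ)) (hL : IsLaver L) (n : ℕ) :
    (Q L hL n).1 ∈ L ∧ (Q L hL n).2 ∈ L ∧
    (Q L hL n).1.length = n ∧ (Q L hL n).2.length = n := by
  induction n with
  | zero => simpa [Q] using hL.2.1
  | succ n ih =>
    obtain ⟨h1, h2, l1, l2⟩ := ih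
    by_cases hn : Even n <;>
      simp only [Q, hn, if_true, if_false] <;>
      exact ⟨nxt_mem L hL _ h1 _, nxt_mem L hL _ h2 _, by simp [l1], by simp [l2]⟩

/-- The first branch. -/
noncomputable def xb (L : Set (List ℕ)) (hL : IsLaver L) (n : ℕ) : ℕ :=
  (Q L hL (n+1)).1.getD n 0

/-- The second branch. -/
noncomputable def yb (L : Set (List ℕ)) (hL : IsLaver L) (n : ℕ) : ℕ :=
  (Q L hL (n+1)).2.getD n 0

lemma Q_succ_fst (L : Set (List ℕ)) (hL : IsLaver L) (n : ℕ) :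
    (Q L hL (n+1)).1 = (Q L hL n).1 ++ [xb L hL n] := by
  have l1 := (Q_invariant L hL n).2.2.1
  by_cases hn : Even n <;>
    simp only [Q, hn, if_true, if_false, xb] <;>
    rw [List.getD_append_right _ _ _ _ (by omega)] <;> simp [l1]

lemma Q_succ_snd (L : Set (List ℕ)) (hL : IsLaver L) (n : ℕ) :
    (Q L hL (n+1)).2 = (Q L hL n).2 ++ [yb L hL n] := by
  have l2 := (Q_invariant L hL n).2.2.2
  by_cases hn : Even n <;>
    simp only [Q, hn, if_true, if_false, yb] <;>
    rw [List.getD_append_right _ _ _ _ (by omega)] <;> simp [l2]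

lemma cross (L : Set (List ℕ)) (hL : IsLaver L) (n : ℕ) :
    (Even n → 2 * yb L hL n + 1 < xb L hL n) ∧
    (¬ Even n → 2 * xb L hL n + 1 < yb L hL n) := by
  obtain ⟨h1, h2, l1, l2⟩ := Q_invariant L hL n
  by_cases hn : Even n
  · refine ⟨fun _ => ?_, fun h => absurd hn h⟩
    have ha : xb L hL n = nxt L hL (Q L hL n).1 (2 * nxt L hL (Q L hL n).2 0 + 1) := by
      simp only [xb, Q, hn, if_true]
      rw [List.getD_append_right _ _ _ _ (by omega)]; simp [l1]
    have hb : yb L hL n = nxt L hL (Q L hL n).2 0 := by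
      simp only [yb, Q, hn, if_true]
      rw [List.getD_append_right _ _ _ _ (by omega)]; simp [l2]
    rw [ha, hb]
    exact nxt_gt L hL _ h1 _
  · refine ⟨fun h => absurd h hn, fun _ => ?_⟩
    have ha : xb L hL n = nxt L hL (Q L hL n).1 0 := by
      simp only [xb, Q, hn, if_false]
      rw [List.getD_append_right _ _ _ _ (by omega)]; simp [l1]
    have hb : yb L hL n = nxt L hL (Q L hL n).2 (2 * nxt L hL (Q L hL n).1 0 + 1) := by
      simp only [yb, Q, hn, if_false]
      rw [List.getD_append_right _ _ _ _ (by omega)]; simp [l2]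
    rw [ha, hb]
    exact nxt_gt L hL _ h2 _

lemma res_succ (x : ℕ → ℕ) (n : ℕ) : res x (n+1) = res x n ++ [x n] := by
  unfold res
  rw [List.ofFn_succ']
  simp [List.concat_eq_append]

lemma res_eq_Q_fst (L : Set (List ℕ)) (hL : IsLaver L) (n : ℕ) :
    res (xb L hL) n = (Q L hL n).1 := by
  induction n with
  | zero => simp [res, Q]
  | succ n ih => rw [res_succ, ih, Q_succ_fst]

lemma res_eq_Q_snd (L : Set (List ℕ)) (hL : IsLaver L) (n : ℕ) :
    res (yb L hL) n = (Q L hL n).2 := by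
  induction n with
  | zero => simp [res, Q]
  | succ n ih => rw [res_succ, ih, Q_succ_snd]

theorem laver_not_covered_by_scale (g : {o : Ordinal // o < ω₁} → ℕ → ℕ)
    (hmono : ∀ a b : {o : Ordinal // o < ω₁}, a < b → EvLt (g a) (g b))
    (hdom : ∀ f : ℕ → ℕ, ∃ a : {o : Ordinal // o < ω₁}, EvLt f (g a))
    (L : Set (List ℕ)) (hL : IsLaver L) :
    ¬ branches L ⊆ ⋃ a : {o : Ordinal // o < ω₁}, Cset (g a) := by
  intro hsub
  set x := xb L hL with hx
  set y := yb L hL with hy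
  have hxb : x ∈ branches L := fun n => by
    rw [hx, res_eq_Q_fst]; exact (Q_invariant L hL n).1
  have hyb : y ∈ branches L := fun n => by
    rw [hy, res_eq_Q_snd]; exact (Q_invariant L hL n).2.1
  obtain ⟨_, ⟨a, rfl⟩, hxa⟩ := hsub hxb
  obtain ⟨_, ⟨b, rfl⟩, hyb'⟩ := hsub hyb
  -- on even n : g a n > g b n ; on odd n : g b n > g a n
  have key : ∀ n, (Even n → g b n < g a n) ∧ (¬ Even n → g a n < g b n) := by
    intro n
    have hxn := hxa n
    have hyn := hyb' n
    have hc := cross L hL n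
    rw [← hx, ← hy] at hc
    constructor
    · intro he; have := hc.1 he; (try simp only [Cset, Set.mem_setOf_eq] at hxn hyn); omega
    · intro he; have := hc.2 he; (try simp only [Cset, Set.mem_setOf_eq] at hxn hyn); omega
  rcases lt_trichotomy a b with hab | hab | hab
  · obtain ⟨N, hN⟩ := (Filter.eventually_atTop).1 (hmono a b hab)
    have h1 := hN (2*N) (by omega)
    have h2 := (key (2*N)).1 ⟨N, by omega⟩
    omega
  · subst hab
    have := (key 0).1 (Even.zero)
    omega
  · obtain ⟨N, hN⟩ := (Filter.eventually_atTop).1 (hmono b a hab)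
    have h1 := hN (2*N+1) (by omega)
    have h2 := (key (2*N+1)).2 (by simp [Nat.even_add_one, parity_simps])
    omega
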